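/- Let λ₁ > 0, M > 0 and 0 < p ≤ 1, and suppose Z > 0 satisfies Z = p·λ₁·(1 − e^{−Z M}). Define G(x) = 1 − e^{−Z x} for x ≥ 0 and f_X(x) = λ₁ e^{−λ₁ x}. Then for every x ≥ 0, G(x) = ∫₀ˣ [ (1 − p)·f_X(x − u)·G(u) + p·f_X(u)·G(x + M − u) ] du. -/

import Mathlib

open Real MeasureTheory

/-- Verification step of Theorem 1 (IBEP): the candidate stationary CDF
`G(x) = 1 - exp(-Z x)` satisfies the steady-state integral equation. -/
theorem stmt0 (lam M p Z : ℝ) (hlam : 0 < lam) (hM : 0 < M)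
    (hp0 : 0 < p) (hp1 : p ≤ 1) (hZpos : 0 < Z)
    (hZeq : Z = p * lam * (1 - Real.exp (-Z * M))) :
    ∀ x : ℝ, 0 ≤ x →
      (1 - Real.exp (-Z * x)) =
        ∫ u in (0:ℝ)..x,
          ((1 - p) * (lam * Real.exp (-lam * (x - u))) * (1 - Real.exp (-Z * u))
            + p * (lam * Real.exp (-lam * u)) * (1 - Real.exp (-Z * (x + M - u)))) := by
  intro x hx
  -- Z < lam
  have hC0 : 0 < Real.exp (-Z * M) := Real.exp_pos _
  have hC1 : Real.exp (-Z * M) < 1 := by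
    rw [Real.exp_lt_one_iff]; nlinarith
  have hZlt : Z < lam := by
    nlinarith [mul_pos (mul_pos hp0 hlam) hC0, mul_nonneg (sub_nonneg.2 hp1) hlam.le]
  have hne : lam - Z ≠ 0 := by linarith
  set F : ℝ → ℝ := fun u =>
    (1 - p) * Real.exp (-lam * (x - u))
      - ((1 - p) * lam / (lam - Z)) * (Real.exp (-lam * x) * Real.exp ((lam - Z) * u))
      - p * Real.exp (-lam * u)
      + (p * lam / (lam - Z)) * (Real.exp (-Z * (x + M)) * Real.exp ((Z - lam) * u))
    with hF
  have hderiv : ∀ u ∈ Set.uIcc (0:ℝ) x,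
      HasDerivAt F
        ((1 - p) * (lam * Real.exp (-lam * (x - u))) * (1 - Real.exp (-Z * u))
          + p * (lam * Real.exp (-lam * u)) * (1 - Real.exp (-Z * (x + M - u)))) u := by
    intro u _
    have h1 : HasDerivAt (fun u : ℝ => Real.exp (-lam * (x - u)))
        (Real.exp (-lam * (x - u)) * lam) u := by
      have : HasDerivAt (fun u : ℝ => -lam * (x - u)) lam u := by
        simpa using ((hasDerivAt_id u).const_sub x).const_mul (-lam)
      simpa using this.exp
    have h2 : HasDerivAt (fun u : ℝ => Real.exp ((lam - Z) * u))
        (Real.exp ((lam - Z) * u) * (lam - Z)) u := by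
      have : HasDerivAt (fun u : ℝ => (lam - Z) * u) (lam - Z) u := by
        simpa using (hasDerivAt_id u).const_mul (lam - Z)
      simpa using this.exp
    have h3 : HasDerivAt (fun u : ℝ => Real.exp (-lam * u))
        (Real.exp (-lam * u) * (-lam)) u := by
      have : HasDerivAt (fun u : ℝ => -lam * u) (-lam) u := by
        simpa using (hasDerivAt_id u).const_mul (-lam)
      simpa using this.exp
    have h4 : HasDerivAt (fun u : ℝ => Real.exp ((Z - lam) * u))
        (Real.exp ((Z - lam) * u) * (Z - lam)) u := by
      have : HasDerivAt (fun u : ℝ => (Z - lam) * u) (Z - lam) u := by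
        simpa using (hasDerivAt_id u).const_mul (Z - lam)
      simpa using this.exp
    have hD := (((h1.const_mul (1 - p)).sub
        ((h2.const_mul (Real.exp (-lam * x))).const_mul ((1 - p) * lam / (lam - Z)))).sub
        (h3.const_mul p)).add
        ((h4.const_mul (Real.exp (-Z * (x + M)))).const_mul (p * lam / (lam - Z)))
    refine hD.congr_deriv (Eq.symm ?_)
    have e1 : Real.exp (-lam * x) * Real.exp ((lam - Z) * u)
        = Real.exp (-lam * (x - u)) * Real.exp (-Z * u) := by
      rw [← Real.exp_add, ← Real.exp_add]; congr 1; ring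
    have e2 : Real.exp (-Z * (x + M)) * Real.exp ((Z - lam) * u)
        = Real.exp (-lam * u) * Real.exp (-Z * (x + M - u)) := by
      rw [← Real.exp_add, ← Real.exp_add]; congr 1; ring
    field_simp
    ring_nf at e1 e2 ⊢
    linear_combination (lam - Z) * (p * e2 + (1 - p) * e1)
  have hint : IntervalIntegrable
      (fun u => (1 - p) * (lam * Real.exp (-lam * (x - u))) * (1 - Real.exp (-Z * u))
          + p * (lam * Real.exp (-lam * u)) * (1 - Real.exp (-Z * (x + M - u))))
      MeasureTheory.volume 0 x := by
    apply Continuous.intervalIntegrable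
    fun_prop
  rw [intervalIntegral.integral_eq_sub_of_hasDerivAt hderiv hint]
  simp only [hF]
  have e3 : Real.exp (-lam * x) * Real.exp ((lam - Z) * x) = Real.exp (-Z * x) := by
    rw [← Real.exp_add]; congr 1; ring
  have e4 : Real.exp (-Z * (x + M)) * Real.exp ((Z - lam) * x)
      = Real.exp (-Z * M) * Real.exp (-lam * x) := by
    rw [← Real.exp_add, ← Real.exp_add]; congr 1; ring
  have e5 : Real.exp (-Z * (x + M)) = Real.exp (-Z * x) * Real.exp (-Z * M) := by
    rw [← Real.exp_add]; congr 1; ring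
  rw [e3, e4]
  simp only [mul_zero, Real.exp_zero, mul_one, sub_zero, Real.exp_zero]
  rw [e5]
  field_simp
  ring_nf at hZeq ⊢
  linear_combination (norm := (simp only [Real.exp_zero]; ring1)) (Real.exp (-(Z * x)) - Real.exp (-(lam * x))) * hZeq
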